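/- Let (G,c) be a W-state graph and let G_m be the spanning subgraph of monochromatic edges. Then every vertex of G_m is inessential, i.e., for every vertex v there exists a maximum matching of G_m not covering v. -/

import Mathlib

/-! Multigraphs (parallel edges allowed, no loops) with half-edge 2-colourings,
    matchings, W-state graphs and W-cones, following the paper. -/

structure Multigraph (V E : Type) where
  fst : E → V
  snd : E → V
  no_loop : ∀ e, fst e ≠ snd e

namespace Multigraph

variable {V E : Type} (G : Multigraph V E)

/-- Edge `e` is incident with vertex `v`. -/
def Inc (e : E) (v : V) : Prop := G.fst e = v ∨ G.snd e = v

/-- Adjacency using only edges in the edge set `F`. -/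
def AdjIn (F : Set E) (u v : V) : Prop :=
  u ≠ v ∧ ∃ e ∈ F, G.Inc e u ∧ G.Inc e v

def Adj (u v : V) : Prop := G.AdjIn Set.univ u v

/-- Reachability inside the vertex set `S`, using only edges in `F`. -/
def ReachOn (F : Set E) (S : Set V) (u v : V) : Prop :=
  Relation.ReflTransGen (fun a b => a ∈ S ∧ b ∈ S ∧ G.AdjIn F a b) u v

/-- The subgraph with edge set `F` induced on the vertex set `S` is connected. -/
def ConnectedOn (F : Set E) (S : Set V) : Prop :=
  ∀ u ∈ S, ∀ v ∈ S, G.ReachOn F S u v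

def Connected : Prop := G.ConnectedOn Set.univ Set.univ

/-- `K` is a connected component of the subgraph with edge set `F` induced on `S`. -/
def IsCompOn (F : Set E) (S : Set V) (K : Set V) : Prop :=
  ∃ v ∈ S, K = {u | u ∈ S ∧ G.ReachOn F S u v}

def IsMatching (M : Set E) : Prop :=
  ∀ e ∈ M, ∀ f ∈ M, e ≠ f → ∀ v : V, ¬ (G.Inc e v ∧ G.Inc f v)

/-- `M` is a perfect matching of the subgraph of `G` induced on `S`. -/
def IsPerfectMatchingOn (S : Set V) (M : Set E) : Prop :=
  (∀ e ∈ M, G.fst e ∈ S ∧ G.snd e ∈ S) ∧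
  ∀ v ∈ S, ∃! e, e ∈ M ∧ G.Inc e v

def IsPerfectMatching (M : Set E) : Prop :=
  G.IsPerfectMatchingOn Set.univ M

/-- Every edge lies in some perfect matching. -/
def MatchingCovered : Prop :=
  ∀ e : E, ∃ M : Set E, G.IsPerfectMatching M ∧ e ∈ M

/-- The subgraph with edge set `F` induced on `K` is factor-critical. -/
def FactorCriticalOn (F : Set E) (K : Set V) : Prop :=
  ∀ v ∈ K, ∃ M : Set E, M ⊆ F ∧ G.IsPerfectMatchingOn (K \ {v}) M

def FactorCritical : Prop := G.FactorCriticalOn Set.univ Set.univ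

/-- `M` is a maximum matching among matchings using only edges in `F`. -/
def IsMaxMatchingIn (F M : Set E) : Prop :=
  M ⊆ F ∧ G.IsMatching M ∧
  ∀ N : Set E, N ⊆ F → G.IsMatching N → N.ncard ≤ M.ncard

/-- Half-edge 2-colourings are functions `c : E → V → Bool`
    (`true` = red, `false` = blue; only the values at endpoints matter). -/
def Bichromatic (c : E → V → Bool) (e : E) : Prop :=
  c e (G.fst e) ≠ c e (G.snd e)

/-- The monochromatic edges. -/
def MonoEdges (c : E → V → Bool) : Set E := {e | ¬ G.Bichromatic c e}

/-- Every vertex has an incident red half-edge. -/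
def VertexCond (c : E → V → Bool) : Prop :=
  ∀ v : V, ∃ e : E, G.Inc e v ∧ c e v = true

/-- Every perfect matching contains exactly one bichromatic edge. -/
def MatchingCond (c : E → V → Bool) : Prop :=
  ∀ M : Set E, G.IsPerfectMatching M → ∃! e, e ∈ M ∧ G.Bichromatic c e

/-- All monochromatic edges are blue. -/
def NoRedMono (c : E → V → Bool) : Prop :=
  ∀ e : E, ¬ G.Bichromatic c e → c e (G.fst e) = false

/-- W-state graph. -/
def IsWState (c : E → V → Bool) : Prop :=
  G.MatchingCovered ∧ G.MatchingCond c ∧ G.VertexCond c ∧ G.NoRedMono c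

def Universal (v : V) : Prop := ∀ u : V, u ≠ v → G.Adj u v

/-- W-cone with apex `v`. -/
def IsWConeWithApex (c : E → V → Bool) (v : V) : Prop :=
  G.MatchingCovered ∧ G.Universal v ∧
  (∀ e : E, G.Bichromatic c e ↔ G.Inc e v) ∧
  G.VertexCond c ∧ G.NoRedMono c

def IsWCone (c : E → V → Bool) : Prop := ∃ v : V, G.IsWConeWithApex c v

/-- `e` and `f` are parallel edges (same pair of endpoints). -/
def Parallel (e f : E) : Prop :=
  (G.fst e = G.fst f ∧ G.snd e = G.snd f) ∨
  (G.fst e = G.snd f ∧ G.snd e = G.fst f)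

/-- The cut `δ(X)`. -/
def CutEdges (X : Set V) : Set E :=
  {e | (G.fst e ∈ X ∧ G.snd e ∉ X) ∨ (G.fst e ∉ X ∧ G.snd e ∈ X)}

/-- `δ(X)` is a tight cut. -/
def IsTightCut (X : Set V) : Prop :=
  ∀ M : Set E, G.IsPerfectMatching M → ∃! e, e ∈ M ∧ e ∈ G.CutEdges X

def Bipartite : Prop :=
  ∃ f : V → Bool, ∀ e : E, f (G.fst e) ≠ f (G.snd e)

/-- A brick: non-bipartite matching-covered graph with no non-trivial tight cut. -/
def IsBrick : Prop :=
  G.MatchingCovered ∧ ¬ G.Bipartite ∧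
  ∀ X : Set V, 2 ≤ X.ncard → 2 ≤ (Set.univ \ X).ncard → ¬ G.IsTightCut X

end Multigraph

section Aux

variable {V E : Type} [Fintype V] [Fintype E] (G : Multigraph V E)

/-- The endpoint map from (edge in N) × Bool to V. -/
private def endp (N : Set E) : ↥N × Bool → V :=
  fun p => if p.2 then G.fst p.1 else G.snd p.1

private lemma endp_injective {N : Set E} (hN : G.IsMatching N) :
    Function.Injective (endp G N) := by
  rintro ⟨⟨e, he⟩, b⟩ ⟨⟨f, hf⟩, b'⟩ hEq
  have hinc_e : G.Inc e (endp G N (⟨⟨e, he⟩, b⟩)) := by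
    unfold endp; cases b <;> simp [Multigraph.Inc]
  have hinc_f : G.Inc f (endp G N (⟨⟨e, he⟩, b⟩)) := by
    rw [hEq]; unfold endp; cases b' <;> simp [Multigraph.Inc]
  have hef : e = f := by
    by_contra hne
    exact hN e he f hf hne _ ⟨hinc_e, hinc_f⟩
  subst hef
  have hbb : b = b' := by
    by_contra hbb
    have : G.fst e = G.snd e := by
      unfold endp at hEq
      cases b <;> cases b' <;> simp_all
    exact G.no_loop e this
  simp [hbb]

private lemma card_domain (N : Set E) : Nat.card (↥N × Bool) = 2 * N.ncard := by
  simp [Nat.card_prod, Nat.card_coe_set_eq, Nat.card_eq_fintype_card, mul_comm]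

private lemma matching_card_le {N : Set E} (hN : G.IsMatching N) :
    2 * N.ncard ≤ Fintype.card V := by
  have := Nat.card_le_card_of_injective _ (endp_injective G hN)
  rwa [card_domain, Nat.card_eq_fintype_card] at this

private lemma perfect_card {M : Set E} (hM : G.IsPerfectMatching M) :
    2 * M.ncard = Fintype.card V := by
  have hmatch : G.IsMatching M := by
    intro e he f hf hne w ⟨hew, hfw⟩
    have hu := (hM.2 w (Set.mem_univ w)).unique ⟨he, hew⟩ ⟨hf, hfw⟩
    exact hne hu
  have hsurj : Function.Surjective (endp G M) := by
    intro w
    obtain ⟨e, ⟨heM, hew⟩, -⟩ := hM.2 w (Set.mem_univ w)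
    rcases hew with hw | hw
    · exact ⟨⟨⟨e, heM⟩, true⟩, hw⟩
    · exact ⟨⟨⟨e, heM⟩, false⟩, hw⟩
  have := Nat.card_eq_of_bijective _ ⟨endp_injective G hmatch, hsurj⟩
  rw [card_domain, Nat.card_eq_fintype_card] at this
  exact this

/-- A matching covering all vertices (by cardinality) is a perfect matching. -/
private lemma matching_perfect_of_card {N : Set E} (hN : G.IsMatching N)
    (hcard : 2 * N.ncard = Fintype.card V) : G.IsPerfectMatching N := by
  have hsurj : Function.Surjective (endp G N) := by
    have hbij := (Nat.bijective_iff_injective_and_card (endp G N)).2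
      ⟨endp_injective G hN, by rw [card_domain, hcard, Nat.card_eq_fintype_card]⟩
    exact hbij.2
  constructor
  · intro e _; exact ⟨Set.mem_univ _, Set.mem_univ _⟩
  · intro w _
    obtain ⟨⟨⟨e, heN⟩, b⟩, hb⟩ := hsurj w
    refine ⟨e, ⟨heN, ?_⟩, ?_⟩
    · unfold endp at hb; cases b <;> simp_all [Multigraph.Inc]
    · rintro f ⟨hfN, hfw⟩
      by_contra hne
      have hew : G.Inc e w := by
        unfold endp at hb; cases b <;> simp_all [Multigraph.Inc]
      exact hN f hfN e heN hne w ⟨hfw, hew⟩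

end Aux

/-- In a W-state graph, every vertex of the monochromatic subgraph
`G_m` is inessential: some maximum matching of `G_m` misses it. -/
theorem stmt6 {V E : Type} [Fintype V] [Fintype E] (G : Multigraph V E)
    (c : E → V → Bool) (h : G.IsWState c) :
    ∀ v : V, ∃ M : Set E, G.IsMaxMatchingIn (G.MonoEdges c) M ∧
      ∀ e ∈ M, ¬ G.Inc e v := by
  obtain ⟨hcov, hmatchcond, hvertex, hnored⟩ := h
  intro v
  obtain ⟨e, hev, hred⟩ := hvertex v
  -- e is bichromatic
  have hbich : G.Bichromatic c e := by
    intro hbi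
    have hfst := hnored e (fun h' => h' hbi)
    have hsnd : c e (G.snd e) = false := hbi ▸ hfst
    rcases hev with hw | hw <;> simp_all
  obtain ⟨M, hM, heM⟩ := hcov e
  have hMmatch : G.IsMatching M := by
    intro a ha b hb hne w ⟨haw, hbw⟩
    exact hne ((hM.2 w (Set.mem_univ w)).unique ⟨ha, haw⟩ ⟨hb, hbw⟩)
  -- e is the unique bichromatic edge of M
  obtain ⟨g, hg, hgu⟩ := hmatchcond M hM
  have hge : g = e := (hgu e ⟨heM, hbich⟩).symm
  subst hge
  refine ⟨M \ {g}, ⟨?_, ?_, ?_⟩, ?_⟩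
  · -- subset of mono edges
    rintro f ⟨hfM, hfg⟩
    intro hfbi
    exact hfg (hgu f ⟨hfM, hfbi⟩)
  · -- matching
    intro a ha b hb hne w hw
    exact hMmatch a ha.1 b hb.1 hne w hw
  · -- maximality
    intro N hNmono hNmatch
    have hle : 2 * N.ncard ≤ Fintype.card V := matching_card_le G hNmatch
    have hMc : 2 * M.ncard = Fintype.card V := perfect_card G hM
    have hlt : N.ncard < M.ncard := by
      rcases lt_or_eq_of_le (show N.ncard ≤ M.ncard by omega) with h' | h'
      · exact h'
      · exfalso
        have hNperf := matching_perfect_of_card G hNmatch (by omega)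
        obtain ⟨f, ⟨hfN, hfbi⟩, -⟩ := hmatchcond N hNperf
        exact hNmono hfN hfbi
    have hMfin : M.Finite := Set.toFinite M
    rw [Set.ncard_diff_singleton_of_mem heM]
    omega
  · -- avoids v
    rintro f ⟨hfM, hfg⟩ hfv
    have hgv : G.Inc g v := hev
    exact hfg ((hM.2 v (Set.mem_univ v)).unique ⟨hfM, hfv⟩ ⟨heM, hgv⟩)
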